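/- Let V ≥ 1, r ≥ 1, and n ≤ N be natural numbers, and let ε, δ ∈ (0,1). Let X be a binomial random variable with r·n trials and success probability 1/V. If (N : ℝ) ≥ V/(r·δ·ε²), then Pr(|(V/r)·X − n| ≥ ε·N) ≤ δ. (This is the probabilistic core of the paper's multiple-updates Corollary: if each packet performs r independent update operations instead of at most one, then the sampling-accuracy guarantee is achieved after N > ψ/r packets, i.e. the convergence threshold shrinks by a factor of r; stated with the rigorous Chebyshev threshold in place of the normal quantile.) -/

import Mathlib

open MeasureTheory

/-- `X` is a binomial random variable with `n` trials and success probability `p`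
on the probability space `(Ω, μ)`: its law is given by the binomial pmf. -/
def IsBinomial {Ω : Type*} [MeasurableSpace Ω] (μ : Measure Ω) (X : Ω → ℕ) (n : ℕ) (p : ℝ) :
    Prop :=
  ∀ k : ℕ, μ {ω | X ω = k} = ENNReal.ofReal ((n.choose k : ℝ) * p ^ k * (1 - p) ^ (n - k))

/-- **Multiple updates.** If each of the `n ≤ N` packets of a prefix performs `r`
independent update operations, so that `X ∼ Binomial(r·n, 1/V)`, and `N ≥ V / (r·δ·ε²)`,
then `Pr(|(V/r)·X − n| ≥ ε·N) ≤ δ`: the convergence threshold shrinks by a factor `r`. -/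
theorem binomial_multiple_updates {Ω : Type*} [MeasurableSpace Ω] (μ : Measure Ω)
    [IsProbabilityMeasure μ] (V r n N : ℕ) (hV : 1 ≤ V) (hr : 1 ≤ r) (hnN : n ≤ N) (ε δ : ℝ)
    (hε : ε ∈ Set.Ioo (0 : ℝ) 1) (hδ : δ ∈ Set.Ioo (0 : ℝ) 1)
    (X : Ω → ℕ) (hX : IsBinomial μ X (r * n) (1 / (V : ℝ)))
    (hthresh : (N : ℝ) ≥ (V : ℝ) / ((r : ℝ) * δ * ε ^ 2)) :
    μ {ω | ε * (N : ℝ) ≤ |((V : ℝ) / (r : ℝ)) * (X ω : ℝ) - (n : ℝ)|} ≤ ENNReal.ofReal δ := by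
  classical
  obtain ⟨hε0, hε1⟩ := hε
  obtain ⟨hδ0, hδ1⟩ := hδ
  have hV0 : (0:ℝ) < V := by exact_mod_cast hV
  have hr0 : (0:ℝ) < r := by exact_mod_cast hr
  have hN0 : (0:ℝ) < N := lt_of_lt_of_le (by positivity) hthresh
  set m := r * n with hm
  set x : ℝ := 1 / (V : ℝ) with hxdef
  have hx0 : 0 ≤ x := by positivity
  have hx1 : x ≤ 1 := by rw [hxdef, div_le_one hV0]; exact_mod_cast hV
  set p : ℕ → ℝ := fun k => ((m.choose k : ℝ)) * x ^ k * (1-x) ^ (m-k) with hp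
  have hp0 : ∀ k, 0 ≤ p k := fun k =>
    mul_nonneg (mul_nonneg (Nat.cast_nonneg _) (pow_nonneg hx0 _))
      (pow_nonneg (by linarith) _)
  set C : ℕ → Prop := fun k => ε * N ≤ |((V:ℝ)/r) * k - n| with hC
  have hEsub : {ω | ε*N ≤ |((V:ℝ)/r)*(X ω : ℝ) - n|} ⊆
      ⋃ k : ℕ, if C k then {ω | X ω = k} else ∅ := by
    intro ω hω
    refine Set.mem_iUnion.2 ⟨X ω, ?_⟩
    rw [if_pos (show C (X ω) from hω)]
    exact rfl
  have key : ∀ k, μ (if C k then {ω | X ω = k} else ∅)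
      = ENNReal.ofReal (if C k then p k else 0) := by
    intro k
    by_cases h : C k
    · rw [if_pos h, if_pos h, hX k]
    · rw [if_neg h, if_neg h, measure_empty, ENNReal.ofReal_zero]
  have hzero : ∀ k ∉ Finset.range (m+1),
      ENNReal.ofReal (if C k then p k else 0) = 0 := by
    intro k hk
    rw [Finset.mem_range, not_lt] at hk
    have : m.choose k = 0 := Nat.choose_eq_zero_of_lt (by omega)
    have hpk : p k = 0 := by simp [hp, this]
    simp [hpk]
  calc μ {ω | ε*N ≤ |((V:ℝ)/r)*(X ω : ℝ) - n|}
      ≤ μ (⋃ k : ℕ, if C k then {ω | X ω = k} else ∅) := measure_mono hEsub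
    _ ≤ ∑' k, μ (if C k then {ω | X ω = k} else ∅) := measure_iUnion_le _
    _ = ∑' k, ENNReal.ofReal (if C k then p k else 0) := by simp_rw [key]
    _ = ∑ k ∈ Finset.range (m+1), ENNReal.ofReal (if C k then p k else 0) :=
        tsum_eq_sum hzero
    _ = ENNReal.ofReal (∑ k ∈ Finset.range (m+1), (if C k then p k else 0)) := by
        rw [ENNReal.ofReal_sum_of_nonneg]
        intro k _
        split_ifs
        · exact hp0 k
        · exact le_rfl
    _ ≤ ENNReal.ofReal δ := by
        apply ENNReal.ofReal_le_ofReal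
        have hvar : ∑ ν ∈ Finset.range (m+1), ((m:ℝ)*x - ν)^2 * p ν = m*x*(1-x) := by
          have h := bernsteinPolynomial.variance ℝ m
          apply_fun (Polynomial.eval x) at h
          simpa [hp, bernsteinPolynomial, Polynomial.eval_finset_sum, nsmul_eq_mul,
            mul_comm, mul_assoc, mul_left_comm] using h
        have hterm : ∀ k ∈ Finset.range (m+1), (if C k then p k else 0)
            ≤ ((V:ℝ)/r)^2/(ε*N)^2 * (((m:ℝ)*x - k)^2 * p k) := by
          intro k _
          have hmx : (m:ℝ) * x = (r:ℝ) * n / V := by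
            rw [hxdef, hm]; push_cast; field_simp
          have h2 : (((V:ℝ)/r) * k - n)^2 = ((V:ℝ)/r)^2 * ((m:ℝ)*x - k)^2 := by
            have : ((V:ℝ)/r) * k - n = ((V:ℝ)/r) * ((k:ℝ) - (m:ℝ)*x) := by
              rw [hmx]; field_simp
            rw [this]; ring
          by_cases h : C k
          · rw [if_pos h]
            have h1 : (ε*N)^2 ≤ (((V:ℝ)/r) * k - n)^2 := by
              have := pow_le_pow_left₀ (mul_pos hε0 hN0).le h 2
              rwa [sq_abs] at this
            calc p k = 1 * p k := (one_mul _).symm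
              _ ≤ ((((V:ℝ)/r) * k - n)^2/(ε*N)^2) * p k := by
                  apply mul_le_mul_of_nonneg_right _ (hp0 k)
                  rw [le_div_iff₀ (by positivity)]
                  linarith
              _ = ((V:ℝ)/r)^2/(ε*N)^2 * (((m:ℝ)*x - k)^2 * p k) := by
                  rw [h2]; ring
          · rw [if_neg h]
            exact mul_nonneg (by positivity) (mul_nonneg (sq_nonneg _) (hp0 k))
        calc ∑ k ∈ Finset.range (m+1), (if C k then p k else 0)
            ≤ ∑ k ∈ Finset.range (m+1),
                ((V:ℝ)/r)^2/(ε*N)^2 * (((m:ℝ)*x - k)^2 * p k) :=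
              Finset.sum_le_sum hterm
          _ = ((V:ℝ)/r)^2/(ε*N)^2 * (m*x*(1-x)) := by
              rw [← Finset.mul_sum, hvar]
          _ ≤ δ := by
              have hVle : (V:ℝ) ≤ N * ((r:ℝ)*δ*ε^2) := by
                rw [ge_iff_le, div_le_iff₀ (by positivity)] at hthresh
                linarith
              have c0 : (0:ℝ) ≤ ((V:ℝ)/r)^2/(ε*N)^2 := by positivity
              calc ((V:ℝ)/r)^2/(ε*N)^2 * ((m:ℝ)*x*(1-x))
                  ≤ ((V:ℝ)/r)^2/(ε*N)^2 * ((m:ℝ)*x) := by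
                    apply mul_le_mul_of_nonneg_left _ c0
                    nlinarith [mul_nonneg (Nat.cast_nonneg m : (0:ℝ) ≤ m) hx0]
                _ = (V:ℝ)*n/((r:ℝ)*(ε*N)^2) := by
                    rw [hm, hxdef]; push_cast; field_simp
                _ ≤ (V:ℝ)*N/((r:ℝ)*(ε*N)^2) := by
                    have : (n:ℝ) ≤ N := by exact_mod_cast hnN
                    gcongr
                _ ≤ δ := by
                    rw [div_le_iff₀ (by positivity)]
                    nlinarith [mul_le_mul_of_nonneg_left hVle hN0.le]
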